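/- Let d ≥ 2 and let A and A' be d × d admissible matrices. Then the product A·A' is a strictly positive matrix, and its Hilbert-metric diameter satisfies D(A·A') ≤ 2·ln(d), where D(M) := sup{ Θ(M·v, M·w) : v, w ∈ (ℝ_{≥0})^d \ {0} } and Θ is the Hilbert projective metric on (ℝ_{>0})^d. -/

import Mathlib

/-- The Hilbert projective (pseudo)metric on strictly positive vectors. -/
noncomputable def hilbertTheta {m : Type*} [Fintype m] (x x' : m → ℝ) : ℝ :=
  Real.log (sInf {μ : ℝ | 0 < μ ∧ ∀ i, x' i ≤ μ * x i} /
    sSup {l : ℝ | 0 < l ∧ ∀ i, l * x i ≤ x' i})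

/-- The Hilbert-metric diameter of the image of the nonzero nonnegative cone. -/
noncomputable def hilbertDiam {m n : Type*} [Fintype m] [Fintype n]
    (A : Matrix m n ℝ) : ℝ :=
  sSup {t : ℝ | ∃ y y' : n → ℝ, (∀ j, 0 ≤ y j) ∧ y ≠ 0 ∧ (∀ j, 0 ≤ y' j) ∧ y' ≠ 0 ∧
    t = hilbertTheta (A.mulVec y) (A.mulVec y')}

/-- An admissible `d × d` integer matrix: its first column is a positive non-increasing
vector `a` with last entry `1` and for `j ≥ 2` its `j`-th column is `e₁ + ⋯ + e_{σ(j)}`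
for an injective `σ` with `σ(1) = d`. -/
def IsAdmissible {d : ℕ} (A : Matrix (Fin d) (Fin d) ℤ) : Prop :=
  ∃ (a : Fin d → ℤ) (σ : Fin d → Fin d),
    (∀ i, 0 < a i) ∧ (∀ i j : Fin d, i ≤ j → a j ≤ a i) ∧
    (∀ i : Fin d, (i : ℕ) = d - 1 → a i = 1) ∧
    Function.Injective σ ∧ (∀ j : Fin d, (j : ℕ) = 0 → ((σ j : ℕ) = d - 1)) ∧
    (∀ i j : Fin d, (j : ℕ) = 0 → A i j = a i) ∧
    (∀ i j : Fin d, (j : ℕ) ≠ 0 → A i j = if i ≤ σ j then 1 else 0)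

/-- Key structural bounds on the product of two admissible matrices: there is a
"rank-one comparison" weight `c` with `c ≤ A*A' ≤ d*c`. -/
lemma adm_prod_bounds {d : ℕ} (hd : 2 ≤ d) (A A' : Matrix (Fin d) (Fin d) ℤ)
    (hA : IsAdmissible A) (hA' : IsAdmissible A') :
    ∃ c : Fin d → Fin d → ℤ, (∀ i k, 0 < c i k) ∧
      (∀ i k, c i k ≤ (A * A') i k ∧ (A * A') i k ≤ (d : ℤ) * c i k) ∧
      (∀ i j k l, c i k * c j l = c i l * c j k) := by
  obtain ⟨a, σ, ha, hmono, _, _, _, hcol0, hcol⟩ := hA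
  obtain ⟨a', σ', ha', hmono', _, _, _, hcol0', hcol'⟩ := hA'
  have hd0 : 0 < d := by omega
  set z0 : Fin d := ⟨0, hd0⟩ with hz0
  have hz0v : (z0 : ℕ) = 0 := rfl
  -- entrywise facts about A
  have hA_nonneg : ∀ i l, 0 ≤ A i l := by
    intro i l
    by_cases h : (l : ℕ) = 0
    · rw [hcol0 i l h]; exact (ha i).le
    · rw [hcol i l h]; split <;> norm_num
  have hA_le : ∀ i l, A i l ≤ a i := by
    intro i l
    by_cases h : (l : ℕ) = 0
    · rw [hcol0 i l h]
    · rw [hcol i l h]; have := ha i; split <;> omega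
  -- entrywise facts about A'
  have hA'_nonneg : ∀ l k, 0 ≤ A' l k := by
    intro l k
    by_cases h : (k : ℕ) = 0
    · rw [hcol0' l k h]; exact (ha' l).le
    · rw [hcol' l k h]; split <;> norm_num
  have hA'_le1 : ∀ (l k : Fin d), (k : ℕ) ≠ 0 → A' l k ≤ 1 := by
    intro l k h
    rw [hcol' l k h]; split <;> norm_num
  have hA'_top : ∀ (k : Fin d), (k : ℕ) ≠ 0 → A' z0 k = 1 := by
    intro k h
    rw [hcol' z0 k h, if_pos]
    rw [Fin.le_def, hz0v]; exact Nat.zero_le _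
  have hA'_z0le : ∀ l, a' l ≤ a' z0 := by
    intro l
    exact hmono' z0 l (by rw [Fin.le_def, hz0v]; exact Nat.zero_le _)
  -- the weight
  refine ⟨fun i k => (if (k : ℕ) = 0 then a' z0 else 1) * a i, ?_, ?_, ?_⟩
  · intro i k
    have h1 := ha i
    have h2 := ha' z0
    show 0 < (if (k : ℕ) = 0 then a' z0 else 1) * a i
    split <;> positivity
  · intro i k
    rw [Matrix.mul_apply]
    have hterms : ∀ l ∈ Finset.univ, (0 : ℤ) ≤ A i l * A' l k :=
      fun l _ => mul_nonneg (hA_nonneg i l) (hA'_nonneg l k)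
    have hz : A i z0 * A' z0 k = (if (k : ℕ) = 0 then a' z0 else 1) * a i := by
      rw [hcol0 i z0 hz0v]
      by_cases hk : (k : ℕ) = 0
      · rw [hcol0' z0 k hk, if_pos hk]; ring
      · rw [hA'_top k hk, if_neg hk]; ring
    constructor
    · calc (if (k : ℕ) = 0 then a' z0 else 1) * a i = A i z0 * A' z0 k := hz.symm
        _ ≤ ∑ l, A i l * A' l k := Finset.single_le_sum hterms (Finset.mem_univ z0)
    · have hub : ∀ l ∈ Finset.univ,
          A i l * A' l k ≤ (if (k : ℕ) = 0 then a' z0 else 1) * a i := by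
        intro l _
        by_cases hk : (k : ℕ) = 0
        · rw [hcol0' l k hk, if_pos hk]
          calc A i l * a' l ≤ a i * a' z0 :=
                mul_le_mul (hA_le i l) (hA'_z0le l) (ha' l).le (ha i).le
            _ = a' z0 * a i := by ring
        · rw [if_neg hk]
          calc A i l * A' l k ≤ a i * 1 :=
                mul_le_mul (hA_le i l) (hA'_le1 l k hk) (hA'_nonneg l k) (ha i).le
            _ = 1 * a i := by ring
      calc ∑ l, A i l * A' l k
          ≤ ∑ _l : Fin d, (if (k : ℕ) = 0 then a' z0 else 1) * a i :=
            Finset.sum_le_sum hub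
        _ = (d : ℤ) * ((if (k : ℕ) = 0 then a' z0 else 1) * a i) := by
            simp [Finset.sum_const, mul_comm]
  · intro i j k l
    ring

theorem stmt_7 (d : ℕ) (hd : 2 ≤ d) (A A' : Matrix (Fin d) (Fin d) ℤ)
    (hA : IsAdmissible A) (hA' : IsAdmissible A') :
    (∀ i j, 0 < (A * A') i j) ∧
      hilbertDiam ((A * A').map (fun z : ℤ => (z : ℝ))) ≤ 2 * Real.log d := by
  obtain ⟨c, hcpos, hbnd, hcid⟩ := adm_prod_bounds hd A A' hA hA'
  have hPpos : ∀ i j, 0 < (A * A') i j := fun i j =>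
    lt_of_lt_of_le (hcpos i j) (hbnd i j).1
  refine ⟨hPpos, ?_⟩
  set B : Matrix (Fin d) (Fin d) ℝ := (A * A').map (fun z : ℤ => (z : ℝ)) with hBdef
  have hBapp : ∀ i k, B i k = (((A * A') i k : ℤ) : ℝ) := fun i k => rfl
  have hBpos : ∀ i k, 0 < B i k := by
    intro i k; rw [hBapp]; exact_mod_cast hPpos i k
  -- cross inequality over ℤ, then ℝ
  have hcrossZ : ∀ i j k l,
      (A * A') i k * (A * A') j l ≤ (d : ℤ)^2 * ((A * A') i l * (A * A') j k) := by
    intro i j k l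
    calc (A * A') i k * (A * A') j l
        ≤ ((d : ℤ) * c i k) * ((d : ℤ) * c j l) :=
          mul_le_mul (hbnd i k).2 (hbnd j l).2 (hPpos j l).le
            (mul_nonneg (by positivity) (hcpos i k).le)
      _ = (d : ℤ)^2 * (c i k * c j l) := by ring
      _ = (d : ℤ)^2 * (c i l * c j k) := by rw [hcid i j k l]
      _ ≤ (d : ℤ)^2 * ((A * A') i l * (A * A') j k) := by
          apply mul_le_mul_of_nonneg_left _ (by positivity)
          exact mul_le_mul (hbnd i l).1 (hbnd j k).1 (hcpos j k).le (hPpos i l).le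
  have hcross : ∀ i j k l, B i k * B j l ≤ (d : ℝ)^2 * (B i l * B j k) := by
    intro i j k l
    have := hcrossZ i j k l
    rw [hBapp, hBapp, hBapp, hBapp]
    exact_mod_cast this
  -- positivity of images
  have hmv : ∀ (y : Fin d → ℝ) i, B.mulVec y i = ∑ k, B i k * y k := by
    intro y i; rfl
  have himpos : ∀ (y : Fin d → ℝ), (∀ j, 0 ≤ y j) → y ≠ 0 → ∀ i, 0 < B.mulVec y i := by
    intro y hy hy0 i
    rw [hmv]
    have : ∃ k, y k ≠ 0 := by
      by_contra h
      push_neg at h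
      exact hy0 (funext h)
    obtain ⟨k0, hk0⟩ := this
    refine Finset.sum_pos' (fun k _ => mul_nonneg (hBpos i k).le (hy k)) ⟨k0, Finset.mem_univ k0, ?_⟩
    exact mul_pos (hBpos i k0) (lt_of_le_of_ne (hy k0) (Ne.symm hk0))
  -- main diameter bound
  rw [hilbertDiam]
  apply Real.sSup_le
  · rintro t ⟨y, y', hy, hy0, hy', hy'0, rfl⟩
    set x : Fin d → ℝ := B.mulVec y with hx
    set x' : Fin d → ℝ := B.mulVec y' with hx'
    have hxpos : ∀ i, 0 < x i := himpos y hy hy0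
    have hx'pos : ∀ i, 0 < x' i := himpos y' hy' hy'0
    -- bilinear cross inequality
    have hcross2 : ∀ i j, x' i * x j ≤ (d : ℝ)^2 * (x i * x' j) := by
      intro i j
      have e1 : x' i * x j = ∑ k, ∑ l, (B i k * y' k) * (B j l * y l) := by
        rw [hx', hx, hmv, hmv, Finset.sum_mul_sum]
      have e2 : x i * x' j = ∑ k, ∑ l, (B i l * y l) * (B j k * y' k) := by
        rw [hx, hx', hmv, hmv, Finset.sum_mul_sum]
        exact Finset.sum_comm
      rw [e1, e2, Finset.mul_sum]
      refine Finset.sum_le_sum fun k _ => ?_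
      rw [Finset.mul_sum]
      refine Finset.sum_le_sum fun l _ => ?_
      have h := mul_le_mul_of_nonneg_right (hcross i j k l) (mul_nonneg (hy' k) (hy l))
      calc (B i k * y' k) * (B j l * y l) = B i k * B j l * (y' k * y l) := by ring
        _ ≤ (d : ℝ)^2 * (B i l * B j k) * (y' k * y l) := h
        _ = (d : ℝ)^2 * ((B i l * y l) * (B j k * y' k)) := by ring
    rw [hilbertTheta]
    set U : Set ℝ := {μ : ℝ | 0 < μ ∧ ∀ i, x' i ≤ μ * x i} with hU
    set L : Set ℝ := {l : ℝ | 0 < l ∧ ∀ i, l * x i ≤ x' i} with hL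
    -- minimizer of x' i / x i
    obtain ⟨j0, _, hj0⟩ := Finset.exists_min_image Finset.univ (fun i => x' i / x i)
      ⟨⟨0, by omega⟩, Finset.mem_univ _⟩
    set lam : ℝ := x' j0 / x j0 with hlam
    have hlam_pos : 0 < lam := div_pos (hx'pos j0) (hxpos j0)
    have hlamL : lam ∈ L := by
      refine ⟨hlam_pos, fun i => ?_⟩
      have h := hj0 i (Finset.mem_univ i)
      rw [div_le_div_iff₀ (hxpos j0) (hxpos i)] at h
      rw [hlam, div_mul_eq_mul_div, div_le_iff₀ (hxpos j0)]
      linarith [h]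
    have hmuU : (d : ℝ)^2 * lam ∈ U := by
      refine ⟨by positivity, fun i => ?_⟩
      have h := hcross2 i j0
      rw [hlam]
      rw [show (d : ℝ)^2 * (x' j0 / x j0) * x i = (d : ℝ)^2 * (x i * x' j0) / x j0 by ring]
      rw [le_div_iff₀ (hxpos j0)]
      linarith [h]
    have hbddU : BddBelow U := ⟨0, fun μ hμ => hμ.1.le⟩
    have hbddL : BddAbove L := by
      refine ⟨lam, fun l hl => ?_⟩
      have h := hl.2 j0
      rw [hlam, le_div_iff₀ (hxpos j0)]
      linarith [h]
    have hInf_le : sInf U ≤ (d : ℝ)^2 * lam := csInf_le hbddU hmuU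
    have hSup_ge : lam ≤ sSup L := le_csSup hbddL hlamL
    have hSup_pos : 0 < sSup L := lt_of_lt_of_le hlam_pos hSup_ge
    have hInf_pos : 0 < sInf U := by
      have : lam ≤ sInf U := by
        apply le_csInf ⟨(d : ℝ)^2 * lam, hmuU⟩
        intro μ hμ
        have h := hμ.2 j0
        rw [hlam, div_le_iff₀ (hxpos j0)]
        linarith [h]
      linarith
    have hratio_pos : 0 < sInf U / sSup L := div_pos hInf_pos hSup_pos
    have hratio_le : sInf U / sSup L ≤ (d : ℝ)^2 := by
      calc sInf U / sSup L ≤ ((d : ℝ)^2 * lam) / lam :=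
            div_le_div₀ (by positivity) hInf_le hlam_pos hSup_ge
        _ = (d : ℝ)^2 := by field_simp
    calc Real.log (sInf U / sSup L) ≤ Real.log ((d : ℝ)^2) :=
          Real.log_le_log hratio_pos hratio_le
      _ = 2 * Real.log d := by rw [Real.log_pow]; norm_num
  · have : (1 : ℝ) ≤ (d : ℝ) := by exact_mod_cast Nat.one_le_of_lt hd
    have := Real.log_nonneg this
    linarith
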